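/- Let J : ℝⁿ → ℝ be convex with nonempty compact set X* of global minimizers and minimum value J*. Then for any σ̂ > ε̂ > 0 there exists c > 0 such that J(y) − J* ≥ (c/σ̂²)·dist(y, X*)² for all y with ε̂ ≤ dist(y, X*) ≤ σ̂. -/

import Mathlib

open Metric

/-- Let `J : ℝⁿ → ℝ` be convex with nonempty compact set `X*` of
global minimizers and minimum value `J*`. Then for any `σ̂ > ε̂ > 0` there exists
`c > 0` such that `J(y) − J* ≥ (c/σ̂²)·dist(y, X*)²` for all `y` with
`ε̂ ≤ dist(y, X*) ≤ σ̂`. -/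
theorem stmt18 {n : ℕ} (J : EuclideanSpace ℝ (Fin n) → ℝ)
    (hJ : ConvexOn ℝ Set.univ J)
    (Xstar : Set (EuclideanSpace ℝ (Fin n)))
    (hne : Xstar.Nonempty) (hcp : IsCompact Xstar) (Jstar : ℝ)
    (hmin : ∀ x ∈ Xstar, J x = Jstar) (hlb : ∀ z, Jstar ≤ J z)
    (hexact : ∀ z, J z = Jstar → z ∈ Xstar)
    (σhat εhat : ℝ) (hεhat : 0 < εhat) (hσε : εhat < σhat) :
    ∃ c > (0:ℝ), ∀ y, εhat ≤ Metric.infDist y Xstar →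
      Metric.infDist y Xstar ≤ σhat →
      (c / σhat^2) * (Metric.infDist y Xstar)^2 ≤ J y - Jstar := by
  have hσ : 0 < σhat := hεhat.trans hσε
  set S : Set (EuclideanSpace ℝ (Fin n)) :=
    {y | εhat ≤ Metric.infDist y Xstar ∧ Metric.infDist y Xstar ≤ σhat} with hS
  by_cases hSne : S.Nonempty
  · -- S is compact
    have hclosed : IsClosed S := by
      apply IsClosed.inter
      · exact isClosed_le continuous_const (continuous_infDist_pt Xstar)
      · exact isClosed_le (continuous_infDist_pt Xstar) continuous_const
    have hsub : S ⊆ Metric.cthickening σhat Xstar := by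
      intro y hy
      rw [Metric.mem_cthickening_iff]
      have h1 : Metric.infEDist y Xstar ≠ ⊤ := Metric.infEDist_ne_top hne
      rw [ENNReal.le_ofReal_iff_toReal_le h1 hσ.le]
      exact hy.2
    have hScp : IsCompact S :=
      (hcp.cthickening).of_isClosed_subset hclosed hsub
    have hcont : Continuous J := by
      have := hJ.continuousOn isOpen_univ
      rw [← continuousOn_univ]
      exact this
    obtain ⟨y0, hy0S, hy0min⟩ := hScp.exists_isMinOn hSne hcont.continuousOn
    have hy0pos : 0 < J y0 - Jstar := by
      have : y0 ∉ Xstar := by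
        intro hmem
        have := Metric.infDist_zero_of_mem hmem
        have := hy0S.1
        linarith
      have hne' : J y0 ≠ Jstar := fun h => this (hexact y0 h)
      have := hlb y0
      cases lt_or_eq_of_le this with
      | inl h => linarith
      | inr h => exact absurd h.symm hne'
    refine ⟨J y0 - Jstar, hy0pos, ?_⟩
    intro y hy1 hy2
    have hyS : y ∈ S := ⟨hy1, hy2⟩
    have hle : J y0 ≤ J y := hy0min hyS
    have hd2 : (Metric.infDist y Xstar)^2 ≤ σhat^2 := by
      have h0 : 0 ≤ Metric.infDist y Xstar := Metric.infDist_nonneg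
      nlinarith
    have : ((J y0 - Jstar) / σhat^2) * (Metric.infDist y Xstar)^2 ≤ J y0 - Jstar := by
      rw [div_mul_eq_mul_div, div_le_iff₀ (by positivity)]
      nlinarith
    linarith
  · refine ⟨1, one_pos, fun y hy1 hy2 => absurd ⟨hy1, hy2⟩ (fun h => hSne ⟨y, h⟩)⟩
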